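/- For every natural number n ≥ 2 and every matrix X ∈ Mat_{2n}(ℂ), the following are equivalent: (i) X ∈ 𝔰𝔬(B), X² = 0 and rank X ≤ 2; (ii) there exist u,v ∈ ℂ^{2n} with B(u,u) = B(u,v) = B(v,v) = 0 such that X = Φ(u∧v). (This identifies the closure of the minimal nilpotent orbit of 𝔰𝔬_{2n} in matrix terms with the image under Φ of the decomposable isotropic 2-vectors.) -/

import Mathlib

noncomputable section
open Matrix ExteriorAlgebra

/-- The bilinear form B(x,y) = Σ_{k=1}^{m} x_k y_{m+1-k} (0-indexed via `Fin.rev`). -/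
def bilinB (m : ℕ) (x y : Fin m → ℂ) : ℂ := ∑ k, x k * y k.rev

/-- SO(B): elements of SL_m(ℂ) preserving B. -/
def SOB (m : ℕ) : Set (Matrix.SpecialLinearGroup (Fin m) ℂ) :=
  {g | ∀ x y, bilinB m (g.1.mulVec x) (g.1.mulVec y) = bilinB m x y}

/-- The 2-vector u ∧ v as an element of ⋀²ℂ^m. -/
def wedge (m : ℕ) (u v : Fin m → ℂ) : ⋀[ℂ]^2 (Fin m → ℂ) :=
  ⟨ι ℂ u * ι ℂ v, by
    show _ ∈ LinearMap.range (ι ℂ : (Fin m → ℂ) →ₗ[ℂ] _) ^ 2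
    rw [pow_two]
    exact Submodule.mul_mem_mul (LinearMap.mem_range_self _ u) (LinearMap.mem_range_self _ v)⟩

lemma map_mem_pow2 {m : ℕ} (f : (Fin m → ℂ) →ₗ[ℂ] (Fin m → ℂ)) :
    ∀ x ∈ ⋀[ℂ]^2 (Fin m → ℂ),
      (ExteriorAlgebra.map f) x ∈ ⋀[ℂ]^2 (Fin m → ℂ) := by
  intro x hx
  have h2 : Submodule.map (ExteriorAlgebra.map f).toLinearMap
      (LinearMap.range (ι ℂ (M := Fin m → ℂ))) ≤ LinearMap.range (ι ℂ (M := Fin m → ℂ)) := by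
    rw [← LinearMap.range_comp, map_comp_ι, LinearMap.range_comp]
    exact LinearMap.map_le_range
  have h1 : Submodule.map (ExteriorAlgebra.map f).toLinearMap (⋀[ℂ]^2 (Fin m → ℂ))
      ≤ ⋀[ℂ]^2 (Fin m → ℂ) := by
    show Submodule.map _ (LinearMap.range (ι ℂ (M := Fin m → ℂ)) ^ 2)
      ≤ LinearMap.range (ι ℂ (M := Fin m → ℂ)) ^ 2
    rw [Submodule.map_pow, pow_two, pow_two]
    exact mul_le_mul' h2 h2
  exact h1 ⟨x, hx, rfl⟩

/-- The induced map ⋀²g on the second exterior power. -/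
def mapPow2 {m : ℕ} (f : (Fin m → ℂ) →ₗ[ℂ] (Fin m → ℂ)) :
    ⋀[ℂ]^2 (Fin m → ℂ) →ₗ[ℂ] ⋀[ℂ]^2 (Fin m → ℂ) :=
  (ExteriorAlgebra.map f).toLinearMap.restrict (map_mem_pow2 f)

/-- The Lie algebra 𝔰𝔬(B) = {X : B(Xx,y) + B(x,Xy) = 0 for all x,y}. -/
def soB (m : ℕ) : Set (Matrix (Fin m) (Fin m) ℂ) :=
  {X | ∀ x y, bilinB m (X.mulVec x) y + bilinB m x (X.mulVec y) = 0}

/-- The defining property of Φ : ⋀²ℂ^m → Mat_m(ℂ), namely Φ(u∧v)(x) = B(v,x)u − B(u,x)v. -/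
def IsPhi (m : ℕ) (Φ : ⋀[ℂ]^2 (Fin m → ℂ) →ₗ[ℂ] Matrix (Fin m) (Fin m) ℂ) : Prop :=
  ∀ u v x : Fin m → ℂ,
    (Φ (wedge m u v)).mulVec x = bilinB m v x • u - bilinB m u x • v


namespace Aux

variable {m : ℕ}

lemma bilinB_comm (x y : Fin m → ℂ) : bilinB m x y = bilinB m y x :=
  Fintype.sum_equiv Fin.revPerm _ _ fun k => by simp [mul_comm]

lemma bilinB_rev (x y : Fin m → ℂ) : bilinB m x y = ∑ j, x j.rev * y j :=
  Fintype.sum_equiv Fin.revPerm _ _ fun k => by simp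

lemma bilinB_add_left (x x' y : Fin m → ℂ) :
    bilinB m (x + x') y = bilinB m x y + bilinB m x' y := by
  simp [bilinB, add_mul, Finset.sum_add_distrib]

lemma bilinB_smul_left (a : ℂ) (x y : Fin m → ℂ) :
    bilinB m (a • x) y = a * bilinB m x y := by
  simp [bilinB, Finset.mul_sum, mul_assoc]

lemma bilinB_sub_smul_left (a b : ℂ) (p q y : Fin m → ℂ) :
    bilinB m (a • p - b • q) y = a * bilinB m p y - b * bilinB m q y := by
  simp [bilinB, Finset.mul_sum, sub_mul, mul_assoc, Finset.sum_sub_distrib]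

lemma bilinB_sub_smul_right (a b : ℂ) (p q y : Fin m → ℂ) :
    bilinB m y (a • p - b • q) = a * bilinB m y p - b * bilinB m y q := by
  rw [bilinB_comm, bilinB_sub_smul_left, bilinB_comm p, bilinB_comm q]

lemma bilinB_zero_left (y : Fin m → ℂ) : bilinB m 0 y = 0 := by simp [bilinB]

lemma bilinB_single (x : Fin m → ℂ) (j : Fin m) :
    bilinB m x (Pi.single j 1) = x j.rev := by
  rw [bilinB, Finset.sum_eq_single j.rev]
  · rw [Fin.rev_rev]; simp
  · intro k _ hk
    have : k.rev ≠ j := fun h => hk (by rw [← h, Fin.rev_rev])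
    simp [Pi.single_apply, this]
  · simp

lemma bilinB_nondeg {p : Fin m → ℂ} (h : ∀ y, bilinB m p y = 0) : p = 0 := by
  funext k
  have := h (Pi.single k.rev 1)
  rwa [bilinB_single, Fin.rev_rev] at this

lemma matrix_ext_mulVec {A B : Matrix (Fin m) (Fin m) ℂ}
    (h : ∀ x, A.mulVec x = B.mulVec x) : A = B := by
  ext i j
  have := congrFun (h (Pi.single j 1)) i
  simpa using this

lemma fin2_01 : (0:Fin 2) ≠ 1 := by decide
lemma fin2_10 : (1:Fin 2) ≠ 0 := by decide

/-- The bilinear map (u,v) ↦ [matrix of x ↦ B(v,x)u − B(u,x)v]. -/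
def phiMat (m : ℕ) : (Fin m → ℂ) →ₗ[ℂ] (Fin m → ℂ) →ₗ[ℂ] Matrix (Fin m) (Fin m) ℂ :=
  LinearMap.mk₂ ℂ (fun u v => Matrix.of fun i j => v j.rev * u i - u j.rev * v i)
    (fun u u' v => by
      ext i j
      simp only [Matrix.of_apply, Matrix.add_apply, Pi.add_apply]; ring)
    (fun a u v => by
      ext i j
      simp only [Matrix.of_apply, Matrix.smul_apply, Pi.smul_apply, smul_eq_mul]; ring)
    (fun u v v' => by
      ext i j
      simp only [Matrix.of_apply, Matrix.add_apply, Pi.add_apply]; ring)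
    (fun a u v => by
      ext i j
      simp only [Matrix.of_apply, Matrix.smul_apply, Pi.smul_apply, smul_eq_mul]; ring)

lemma phiMat_mulVec (u v x : Fin m → ℂ) :
    (phiMat m u v).mulVec x = bilinB m v x • u - bilinB m u x • v := by
  funext i
  simp only [phiMat, LinearMap.mk₂_apply, Matrix.mulVec, dotProduct, Matrix.of_apply,
    Pi.sub_apply, Pi.smul_apply, smul_eq_mul, bilinB_rev]
  simp only [sub_mul]
  rw [Finset.sum_sub_distrib, Finset.sum_mul, Finset.sum_mul]
  congr 1 <;> exact Finset.sum_congr rfl fun j _ => by ring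

lemma phiMat_self (u : Fin m → ℂ) : phiMat m u u = 0 := by
  ext i j
  simp [phiMat]

def phiMulti (m : ℕ) :
    MultilinearMap ℂ (fun _ : Fin 2 => (Fin m → ℂ)) (Matrix (Fin m) (Fin m) ℂ) where
  toFun w := phiMat m (w 0) (w 1)
  map_update_add' := by
    intro _ w i x y
    fin_cases i <;>
      simp [Function.update_apply, fin2_01, fin2_10]
  map_update_smul' := by
    intro _ w i a x
    fin_cases i <;>
      simp [Function.update_apply, fin2_01, fin2_10]

def phiAlt (m : ℕ) : (Fin m → ℂ) [⋀^Fin 2]→ₗ[ℂ] Matrix (Fin m) (Fin m) ℂ :=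
  { phiMulti m with
    map_eq_zero_of_eq' := by
      intro w i j hij hne
      fin_cases i <;> fin_cases j <;> simp_all [phiMulti]
      · exact hij ▸ phiMat_self (w 1)
      · exact hij ▸ phiMat_self (w 0) }

def phiFam (m : ℕ) : ∀ i, (Fin m → ℂ) [⋀^Fin i]→ₗ[ℂ] Matrix (Fin m) (Fin m) ℂ :=
  fun i => match i with
  | 2 => phiAlt m
  | _ => 0

def Phi (m : ℕ) : ⋀[ℂ]^2 (Fin m → ℂ) →ₗ[ℂ] Matrix (Fin m) (Fin m) ℂ :=
  (ExteriorAlgebra.liftAlternating (phiFam m)).comp (Submodule.subtype _)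

lemma Phi_wedge (u v : Fin m → ℂ) : Phi m (wedge m u v) = phiMat m u v := by
  show ExteriorAlgebra.liftAlternating (phiFam m) (ι ℂ u * ι ℂ v) = phiMat m u v
  rw [show ι ℂ u * ι ℂ v = ι ℂ u * (ι ℂ v * 1) by rw [mul_one],
    ExteriorAlgebra.liftAlternating_ι_mul, ExteriorAlgebra.liftAlternating_ι_mul,
    ExteriorAlgebra.liftAlternating_one]
  simp [phiFam, phiAlt, phiMulti]

end Aux

/-- X ∈ 𝔰𝔬(B), X² = 0 and rank X ≤ 2 iff X = Φ(u∧v) for isotropic u, v. -/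
theorem stmt4 (n : ℕ) (hn : 2 ≤ n) :
    (∃ Φ : ⋀[ℂ]^2 (Fin (2*n) → ℂ) →ₗ[ℂ] Matrix (Fin (2*n)) (Fin (2*n)) ℂ,
      IsPhi (2*n) Φ) ∧
    ∀ Φ : ⋀[ℂ]^2 (Fin (2*n) → ℂ) →ₗ[ℂ] Matrix (Fin (2*n)) (Fin (2*n)) ℂ,
      IsPhi (2*n) Φ →
        ∀ X : Matrix (Fin (2*n)) (Fin (2*n)) ℂ,
          (X ∈ soB (2*n) ∧ X * X = 0 ∧ X.rank ≤ 2) ↔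
          (∃ u v : Fin (2*n) → ℂ,
            bilinB (2*n) u u = 0 ∧ bilinB (2*n) u v = 0 ∧ bilinB (2*n) v v = 0 ∧
            X = Φ (wedge (2*n) u v)) := by
  classical
  constructor
  · refine ⟨Aux.Phi (2*n), fun u v x => ?_⟩
    rw [Aux.Phi_wedge]
    exact Aux.phiMat_mulVec u v x
  · intro Φ hΦ X
    constructor
    · rintro ⟨hso, hsq, hrk⟩
      have skew : ∀ x y, bilinB (2*n) (X.mulVec x) y = - bilinB (2*n) (X.mulVec y) x := by
        intro x y
        have h := hso x y
        rw [Aux.bilinB_comm x (X.mulVec y)] at h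
        exact eq_neg_of_add_eq_zero_left h
      have hXsq : ∀ x, X.mulVec (X.mulVec x) = 0 := by
        intro x; rw [Matrix.mulVec_mulVec, hsq, Matrix.zero_mulVec]
      have keyOrth : ∀ a b, bilinB (2*n) (X.mulVec a) (X.mulVec b) = 0 := by
        intro a b
        rw [skew a (X.mulVec b), hXsq b, Aux.bilinB_zero_left, neg_zero]
      have selfzero : ∀ x, bilinB (2*n) (X.mulVec x) x = 0 := by
        intro x
        have h := skew x x
        linear_combination h / 2
      by_cases hX0 : ∀ x, X.mulVec x = 0
      · refine ⟨0, 0, by simp [bilinB], by simp [bilinB], by simp [bilinB], ?_⟩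
        refine Aux.matrix_ext_mulVec fun x => ?_
        rw [hX0 x, hΦ]
        simp [Aux.bilinB_zero_left]
      · push_neg at hX0
        obtain ⟨x₀', hx₀'⟩ := hX0
        have hne : ¬ ∀ y, bilinB (2*n) (X.mulVec x₀') y = 0 := fun h => hx₀' (Aux.bilinB_nondeg h)
        push_neg at hne
        obtain ⟨y₀, hc⟩ := hne
        set c := bilinB (2*n) (X.mulVec x₀') y₀ with hcdef
        refine ⟨X.mulVec y₀, X.mulVec (c⁻¹ • x₀'), keyOrth y₀ y₀, keyOrth y₀ _, keyOrth _ _, ?_⟩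
        set x₁ : Fin (2*n) → ℂ := c⁻¹ • x₀' with hx₁
        have h1 : bilinB (2*n) (X.mulVec x₁) y₀ = 1 := by
          rw [hx₁, Matrix.mulVec_smul, Aux.bilinB_smul_left, ← hcdef, inv_mul_cancel₀ hc]
        have h2 : bilinB (2*n) (X.mulVec y₀) x₁ = -1 := by
          rw [skew y₀ x₁, h1]
        refine Aux.matrix_ext_mulVec fun x => ?_
        rw [hΦ]
        -- linear dependence of X x, X x₁, X y₀
        set W := LinearMap.range X.mulVecLin with hW
        have hfin : Module.finrank ℂ W ≤ 2 := hrk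
        have memW : ∀ z, X.mulVec z ∈ W := fun z => ⟨z, by simp⟩
        set fam : Fin 3 → W :=
          ![⟨X.mulVec x, memW x⟩, ⟨X.mulVec x₁, memW x₁⟩, ⟨X.mulVec y₀, memW y₀⟩] with hfam
        have hdep : ¬ LinearIndependent ℂ fam := by
          intro hli
          have h3 := hli.fintype_card_le_finrank
          rw [Fintype.card_fin] at h3
          omega
        rw [Fintype.not_linearIndependent_iff] at hdep
        obtain ⟨g, hg, i0, hi0⟩ := hdep
        have hamb : g 0 • X.mulVec x + g 1 • X.mulVec x₁ + g 2 • X.mulVec y₀ = 0 := by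
          have h4 := congrArg (Subtype.val) hg
          simpa [hfam, Fin.sum_univ_three] using h4
        have p1 : g 0 * bilinB (2*n) (X.mulVec x) y₀ + g 1 = 0 := by
          have h4 := congrArg (fun z => bilinB (2*n) z y₀) hamb
          simpa [Aux.bilinB_add_left, Aux.bilinB_smul_left, Aux.bilinB_zero_left, h1,
            selfzero y₀] using h4
        have p2 : g 0 * bilinB (2*n) (X.mulVec x) x₁ - g 2 = 0 := by
          have h4 := congrArg (fun z => bilinB (2*n) z x₁) hamb
          have := selfzero x₁
          have := h2
          simp only [Aux.bilinB_add_left, Aux.bilinB_smul_left, Aux.bilinB_zero_left,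
            selfzero x₁, h2] at h4
          linear_combination h4
        have hg0 : g 0 ≠ 0 := by
          intro h0
          rw [h0] at p1 p2
          simp at p1 p2
          have hz : ∀ i, g i = 0 := by
            intro i
            fin_cases i
            · exact h0
            · exact p1
            · exact p2
          exact hi0 (hz i0)
        -- scalars
        set a := bilinB (2*n) (X.mulVec y₀) x with ha
        set b := bilinB (2*n) (X.mulVec x₁) x with hb
        have hwy : bilinB (2*n) (X.mulVec x) y₀ = - a := skew x y₀
        have hwx : bilinB (2*n) (X.mulVec x) x₁ = - b := skew x x₁
        have q1 : g 1 = g 0 * a := by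
          rw [hwy] at p1; linear_combination p1
        have q2 : g 2 = -(g 0 * b) := by
          rw [hwx] at p2; linear_combination -p2
        rw [q1, q2] at hamb
        have key : X.mulVec x + a • X.mulVec x₁ + (-b) • X.mulVec y₀ = 0 := by
          have h4 := congrArg (fun z => (g 0)⁻¹ • z) hamb
          simp only [smul_add, smul_smul, smul_zero] at h4
          rw [inv_mul_cancel₀ hg0, one_smul] at h4
          have e1 : (g 0)⁻¹ * (g 0 * a) = a := by field_simp
          have e2 : (g 0)⁻¹ * -(g 0 * b) = -b := by field_simp
          rwa [e1, e2] at h4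
        have k2 : X.mulVec x + a • X.mulVec x₁ = b • X.mulVec y₀ := by
          have h4 := eq_neg_of_add_eq_zero_left key
          rw [h4]; rw [neg_smul, neg_neg]
        exact eq_sub_of_add_eq k2
    · rintro ⟨u, v, huu, huv, hvv, rfl⟩
      have hmv := hΦ u v
      have hvu : bilinB (2*n) v u = 0 := by rw [Aux.bilinB_comm]; exact huv
      refine ⟨?_, ?_, ?_⟩
      · intro x y
        rw [hmv x, hmv y, Aux.bilinB_sub_smul_left, Aux.bilinB_sub_smul_right,
          Aux.bilinB_comm x v, Aux.bilinB_comm x u]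
        ring
      · refine Aux.matrix_ext_mulVec fun x => ?_
        rw [Matrix.zero_mulVec, ← Matrix.mulVec_mulVec, hmv, hmv x,
          Aux.bilinB_sub_smul_right, Aux.bilinB_sub_smul_right]
        simp [huu, huv, hvv, hvu]
      · have hle : LinearMap.range (Φ (wedge (2*n) u v)).mulVecLin ≤
            Submodule.span ℂ (Set.range ![u, v]) := by
          rintro z ⟨x, rfl⟩
          rw [Matrix.mulVecLin_apply, hmv]
          refine Submodule.sub_mem _ ?_ ?_
          · exact Submodule.smul_mem _ _ (Submodule.subset_span ⟨0, rfl⟩)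
          · exact Submodule.smul_mem _ _ (Submodule.subset_span ⟨1, rfl⟩)
        exact le_trans (Submodule.finrank_mono hle)
          (by simpa [Set.finrank] using finrank_range_le_card ![u, v])
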